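/- Let τ, a, b ∈ ℝ with a² − b² = 1, a > 1 and τ·b > 0, and set P = [[1, τ],[0, 1]] and H = [[a, b],[b, a]] in SL(2,ℝ). Then for every natural number n, tr(H·P⁻ⁿ) = tr(H) − n·τ·b, and the greatest natural number n for which tr(H·P⁻ⁿ) ≥ 2 equals ⌊(tr H − 2)/√(tr(H·P·H⁻¹·P⁻¹) − 2)⌋, where ⌊ ⌋ is the greatest integer (floor) function. (This is the formula of Lemma 5.3 of the paper for the integer q associated with a hyperbolic–parabolic pair: q = ⌊(tr H − 2)/√(|tr([H,P]) − 2|)⌋.) -/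

import Mathlib

open Matrix
open scoped MatrixGroups

lemma pow_upper (τ : ℝ) : ∀ n : ℕ, (!![1, -τ; 0, 1] : Matrix (Fin 2) (Fin 2) ℝ) ^ n
    = !![1, -(n : ℝ) * τ; 0, 1] := by
  intro n
  induction n with
  | zero => simp [Matrix.one_fin_two]
  | succ k ih =>
      rw [pow_succ, ih, Matrix.mul_fin_two]
      push_cast
      ring_nf

/-- For the normalized hyperbolic–parabolic pair `H = [[a,b],[b,a]]`, `P = [[1,τ],[0,1]]` in
`SL(2,ℝ)` with `a² − b² = 1`, `a > 1` and `τ·b > 0`: for every `n`,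
`tr(H·P⁻ⁿ) = tr H − n·τ·b`, and the greatest natural number `n` with `tr(H·P⁻ⁿ) ≥ 2` equals
`⌊(tr H − 2) / √(tr(H·P·H⁻¹·P⁻¹) − 2)⌋`. -/
theorem stmt8 (τ a b : ℝ) (h : a ^ 2 - b ^ 2 = 1) (ha : 1 < a) (hτb : 0 < τ * b)
    (P H : SL(2, ℝ))
    (hP : (P : Matrix (Fin 2) (Fin 2) ℝ) = !![1, τ; 0, 1])
    (hH : (H : Matrix (Fin 2) (Fin 2) ℝ) = !![a, b; b, a]) :
    (∀ n : ℕ, Matrix.trace ((H * P⁻¹ ^ n : SL(2, ℝ)) : Matrix (Fin 2) (Fin 2) ℝ)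
        = Matrix.trace (H : Matrix (Fin 2) (Fin 2) ℝ) - n * (τ * b)) ∧
    ∃ n₀ : ℕ,
      IsGreatest {n : ℕ |
          2 ≤ Matrix.trace ((H * P⁻¹ ^ n : SL(2, ℝ)) : Matrix (Fin 2) (Fin 2) ℝ)} n₀ ∧
      (n₀ : ℤ) = ⌊(Matrix.trace (H : Matrix (Fin 2) (Fin 2) ℝ) - 2) /
          Real.sqrt (Matrix.trace ((H * P * H⁻¹ * P⁻¹ : SL(2, ℝ)) : Matrix (Fin 2) (Fin 2) ℝ)
            - 2)⌋ := by
  have hPinv : ((P⁻¹ : SL(2, ℝ)) : Matrix (Fin 2) (Fin 2) ℝ) = !![1, -τ; 0, 1] := by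
    rw [Matrix.SpecialLinearGroup.coe_inv, hP, Matrix.adjugate_fin_two]
    norm_num
  have hHinv : ((H⁻¹ : SL(2, ℝ)) : Matrix (Fin 2) (Fin 2) ℝ) = !![a, -b; -b, a] := by
    rw [Matrix.SpecialLinearGroup.coe_inv, hH, Matrix.adjugate_fin_two]
    simp
  have htrH : Matrix.trace (H : Matrix (Fin 2) (Fin 2) ℝ) = 2 * a := by
    rw [hH, Matrix.trace_fin_two_of]; ring
  have key : ∀ n : ℕ, Matrix.trace ((H * P⁻¹ ^ n : SL(2, ℝ)) : Matrix (Fin 2) (Fin 2) ℝ)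
      = 2 * a - n * (τ * b) := by
    intro n
    rw [Matrix.SpecialLinearGroup.coe_mul, Matrix.SpecialLinearGroup.coe_pow, hPinv, hH,
      pow_upper, Matrix.mul_fin_two, Matrix.trace_fin_two_of]
    ring
  have hτbne : τ * b ≠ 0 := ne_of_gt hτb
  have hcomm : Matrix.trace ((H * P * H⁻¹ * P⁻¹ : SL(2, ℝ)) : Matrix (Fin 2) (Fin 2) ℝ)
      = 2 + (τ * b) ^ 2 := by
    rw [Matrix.SpecialLinearGroup.coe_mul, Matrix.SpecialLinearGroup.coe_mul,
      Matrix.SpecialLinearGroup.coe_mul, hPinv, hHinv, hH, hP]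
    rw [Matrix.mul_fin_two, Matrix.mul_fin_two, Matrix.mul_fin_two, Matrix.trace_fin_two_of]
    nlinarith [h]
  have hsqrt : Real.sqrt (Matrix.trace ((H * P * H⁻¹ * P⁻¹ : SL(2, ℝ)) :
      Matrix (Fin 2) (Fin 2) ℝ) - 2) = τ * b := by
    rw [hcomm]
    simp [Real.sqrt_sq hτb.le]
  refine ⟨fun n => by rw [key n, htrH], ?_⟩
  set x : ℝ := (2 * a - 2) / (τ * b) with hx
  have hx0 : 0 ≤ x := div_nonneg (by linarith) hτb.le
  refine ⟨(⌊x⌋).toNat, ⟨?_, ?_⟩, ?_⟩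
  · simp only [Set.mem_setOf_eq]
    rw [key]
    have h1 : ((⌊x⌋).toNat : ℝ) ≤ x := by
      calc ((⌊x⌋).toNat : ℝ) = ((⌊x⌋ : ℤ) : ℝ) := by
            exact_mod_cast congrArg (Int.cast : ℤ → ℝ) (Int.toNat_of_nonneg (Int.floor_nonneg.mpr hx0))
        _ ≤ x := Int.floor_le x
    have h2 : ((⌊x⌋).toNat : ℝ) * (τ * b) ≤ 2 * a - 2 := by
      calc ((⌊x⌋).toNat : ℝ) * (τ * b) ≤ x * (τ * b) := by
            exact mul_le_mul_of_nonneg_right h1 hτb.le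
        _ = 2 * a - 2 := by rw [hx]; exact div_mul_cancel₀ _ hτbne
    linarith
  · intro n hn
    simp only [Set.mem_setOf_eq, key] at hn
    have hnx : (n : ℝ) ≤ x := by
      rw [hx, le_div_iff₀ hτb]; linarith
    have : (n : ℤ) ≤ ⌊x⌋ := by
      exact_mod_cast Int.le_floor.mpr (by exact_mod_cast hnx)
    omega
  · rw [htrH, hsqrt, Int.toNat_of_nonneg (Int.floor_nonneg.mpr hx0)]
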